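/- Let Y be a finite nonempty set, let π_inst be a strictly positive probability mass function on Y, let r : Y → ℝ, and let β > 0. Define for each t ≥ 0 the distribution π_t(y) = π_inst(y) exp(((1 − e^{−βt})/β) r(y)) / Z_t, where Z_t = ∑_{y'} π_inst(y') exp(((1 − e^{−βt})/β) r(y')). Then π_0 = π_inst, and for every y ∈ Y and t ≥ 0, the map t ↦ log π_t(y) is differentiable with derivative equal to r(y) − β(log π_t(y) − log π_inst(y)) − β − λ_t, where λ_t = ∑_y π_t(y)[ r(y) − β(log π_t(y) − log π_inst(y)) − β ]; that is, π_t solves the natural-gradient replicator flow of the KL-regularized objective started at π_inst. -/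

import Mathlib

/-- Closed-form solution of the natural-gradient replicator flow: The
family `p t y = πinst y * exp (((1 - exp (-(β * t))) / β) * r y) / Z t` satisfies
`p 0 = πinst`, and for every `y` and `t ≥ 0` the map `t ↦ log (p t y)` is differentiable
with derivative `r y - β * (log (p t y) - log (πinst y)) - β - λ t`, where
`λ t = ∑ y, p t y * (r y - β * (log (p t y) - log (πinst y)) - β)` is the Lagrange
multiplier enforcing normalization; that is, `p` solves the natural-gradient replicator
flow of the KL-regularized objective started at `πinst`. -/
theorem stmt15 {Y : Type*} [Fintype Y] [Nonempty Y]
    (πinst : Y → ℝ) (hpos : ∀ y, 0 < πinst y) (hsum : ∑ y, πinst y = 1)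
    (r : Y → ℝ) (β : ℝ) (hβ : 0 < β)
    (Z : ℝ → ℝ)
    (hZ : ∀ t, Z t = ∑ y', πinst y' * Real.exp ((1 - Real.exp (-(β * t))) / β * r y'))
    (p : ℝ → Y → ℝ)
    (hp : ∀ t y, p t y = πinst y * Real.exp ((1 - Real.exp (-(β * t))) / β * r y) / Z t)
    (lam : ℝ → ℝ)
    (hlam : ∀ t, lam t =
      ∑ y, p t y * (r y - β * (Real.log (p t y) - Real.log (πinst y)) - β)) :
    (∀ y, p 0 y = πinst y) ∧
    ∀ (y : Y) (t : ℝ), 0 ≤ t →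
      HasDerivAt (fun t' => Real.log (p t' y))
        (r y - β * (Real.log (p t y) - Real.log (πinst y)) - β - lam t) t := by
  have hb : β ≠ 0 := hβ.ne'
  have hZpos : ∀ t, 0 < Z t := by
    intro t
    rw [hZ t]
    exact Finset.sum_pos (fun y _ => mul_pos (hpos y) (Real.exp_pos _)) Finset.univ_nonempty
  have hZ0 : Z 0 = 1 := by
    rw [hZ 0]
    simp [hsum]
  have hp0 : ∀ y, p 0 y = πinst y := by
    intro y
    rw [hp 0 y, hZ0]
    simp
  refine ⟨hp0, ?_⟩
  intro y t _
  -- log formula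
  have hlogeq : ∀ t' y', Real.log (p t' y') =
      Real.log (πinst y') + (1 - Real.exp (-(β * t'))) / β * r y' - Real.log (Z t') := by
    intro t' y'
    rw [hp t' y', Real.log_div (mul_pos (hpos y') (Real.exp_pos _)).ne' (hZpos t').ne',
      Real.log_mul (hpos y').ne' (Real.exp_ne_zero _), Real.log_exp]
  -- derivative of a t' := (1 - exp(-(β t')))/β
  have ha : HasDerivAt (fun t' => (1 - Real.exp (-(β * t'))) / β)
      (Real.exp (-(β * t))) t := by
    have h1 : HasDerivAt (fun t' : ℝ => -(β * t')) (-β) t := by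
      simpa using ((hasDerivAt_id t).const_mul β).fun_neg
    have h2 := h1.exp
    have h3 := ((hasDerivAt_const t (1 : ℝ)).sub h2).div_const β
    refine h3.congr_deriv ?_
    rw [zero_sub, mul_neg, neg_neg, mul_div_assoc, div_self hb, mul_one]
  -- derivative of Z
  set e : ℝ := Real.exp (-(β * t)) with he
  have hZd : HasDerivAt Z
      (∑ y', πinst y' * (Real.exp ((1 - e) / β * r y') * (e * r y'))) t := by
    have := HasDerivAt.fun_sum (u := Finset.univ)
      (fun y' (_ : y' ∈ Finset.univ) => ((ha.mul_const (r y')).exp.const_mul (πinst y')))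
    have heq : (fun t' => ∑ y', πinst y' * Real.exp ((1 - Real.exp (-(β * t'))) / β * r y')) = Z := by
      funext t'; rw [hZ t']
    rwa [heq] at this
  -- sum of p is 1
  have hsum1 : ∑ y', p t y' = 1 := by
    simp only [hp t]
    rw [← Finset.sum_div, ← hZ t, div_self (hZpos t).ne']
  -- D / Z t = e * S
  set S : ℝ := ∑ y', p t y' * r y' with hS
  have hD : (∑ y', πinst y' * (Real.exp ((1 - e) / β * r y') * (e * r y'))) = Z t * (e * S) := by
    rw [hS, Finset.mul_sum, Finset.mul_sum]
    refine Finset.sum_congr rfl fun y' _ => ?_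
    rw [hp t y']
    field_simp [(hZpos t).ne']
    rw [← he]
    ring
  -- lam formula
  have hlam' : lam t = e * S + β * Real.log (Z t) - β := by
    rw [hlam t]
    have hterm : ∀ y' ∈ Finset.univ, p t y' * (r y' - β * (Real.log (p t y') - Real.log (πinst y')) - β)
        = e * (p t y' * r y') + (β * Real.log (Z t) - β) * p t y' := by
      intro y' _
      rw [hlogeq t y']
      field_simp
      ring
    rw [Finset.sum_congr rfl hterm, Finset.sum_add_distrib, ← Finset.mul_sum, ← Finset.mul_sum,
      hsum1, mul_one, hS]
    ring
  -- assemble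
  have hfun : (fun t' => Real.log (p t' y)) =
      fun t' => Real.log (πinst y) + (1 - Real.exp (-(β * t'))) / β * r y - Real.log (Z t') := by
    funext t'; exact hlogeq t' y
  rw [hfun]
  have hmain := ((hasDerivAt_const t (Real.log (πinst y))).add (ha.mul_const (r y))).sub
    (hZd.log (hZpos t).ne')
  refine hmain.congr_deriv ?_
  rw [hlam', hlogeq t y, hD, mul_comm (Z t) (e * S), mul_div_assoc,
    div_self (hZpos t).ne', mul_one]
  field_simp
  ring
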